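/- Let X be a Banach space and f : X → ℝ ∪ {+∞} proper, lower semicontinuous, and bounded below. If there exists γ > 0 such that the global slope satisfies |∂f|(x) ≥ γ for all x ≠ x̄, then x̄ is a global minimizer of f. -/

import Mathlib

open Set

/-- The global slope `|∂f|(x) = sup_{y ≠ x} max{f x − f y, 0} / ‖x − y‖`. -/
noncomputable def globalSlope {X : Type*} [NormedAddCommGroup X]
    (f : X → EReal) (x : X) : EReal :=
  ⨆ y ∈ {y : X | y ≠ x}, max (f x - f y) 0 * (((‖x - y‖)⁻¹ : ℝ) : EReal)

/-- Core of Ekeland's variational principle for real-valued lower semicontinuous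
functions bounded below on a complete space: there is a point `z` in the
"descent set" of `x0` whose own descent set is trivial. -/
lemma ekeland_core {X : Type*} [NormedAddCommGroup X] [CompleteSpace X]
    (g : X → ℝ) (cb : ℝ) (hgb : ∀ x, cb ≤ g x) (hg : LowerSemicontinuous g)
    (γ' : ℝ) (hγ' : 0 < γ') (x0 : X) :
    ∃ z : X, g z + γ' * ‖z - x0‖ ≤ g x0 ∧
      ∀ w, w ≠ z → g z < g w + γ' * ‖w - z‖ := by
  classical
  set A : X → Set X := fun a => {y | g y + γ' * ‖y - a‖ ≤ g a} with hA
  have hself : ∀ a, a ∈ A a := by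
    intro a; simp [hA]
  have htrans : ∀ a b c, b ∈ A a → c ∈ A b → c ∈ A a := by
    intro a b c hb hc
    simp only [hA, mem_setOf_eq] at *
    have hn : ‖c - a‖ ≤ ‖c - b‖ + ‖b - a‖ := norm_sub_le_norm_sub_add_norm_sub c b a
    nlinarith [hn]
  have hbdd : ∀ a, BddBelow (g '' A a) := by
    intro a
    exact ⟨cb, by rintro r ⟨y, -, rfl⟩; exact hgb y⟩
  have hne : ∀ a, (g '' A a).Nonempty := fun a => ⟨g a, a, hself a, rfl⟩
  -- choose an approximate minimizer at each step
  have hnext : ∀ (n : ℕ) (a : X), ∃ b, b ∈ A a ∧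
      g b ≤ sInf (g '' A a) + (1/2) ^ n := by
    intro n a
    have hlt : sInf (g '' A a) < sInf (g '' A a) + (1/2) ^ n := by
      have : (0:ℝ) < (1/2)^n := by positivity
      linarith
    obtain ⟨r, ⟨b, hbA, rfl⟩, hr⟩ := exists_lt_of_csInf_lt (hne a) hlt
    exact ⟨b, hbA, hr.le⟩
  choose F hF1 hF2 using hnext
  set x : ℕ → X := fun n => Nat.rec x0 (fun n a => F n a) n with hx
  have hx0 : x 0 = x0 := rfl
  have hxs : ∀ n, x (n+1) = F n (x n) := fun n => rfl
  have hmem : ∀ n, x (n+1) ∈ A (x n) := by intro n; rw [hxs]; exact hF1 n (x n)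
  have happrox : ∀ n, g (x (n+1)) ≤ sInf (g '' A (x n)) + (1/2) ^ n := by
    intro n; rw [hxs]; exact hF2 n (x n)
  have hchain : ∀ n m, n ≤ m → x m ∈ A (x n) := by
    intro n m hnm
    induction m, hnm using Nat.le_induction with
    | base => exact hself (x n)
    | succ m hnm ih => exact htrans (x n) (x m) (x (m+1)) ih (hmem m)
  have hanti : ∀ n m, n ≤ m → g (x m) + γ' * ‖x m - x n‖ ≤ g (x n) := by
    intro n m hnm; exact hchain n m hnm
  have hganti : Antitone fun n => g (x n) := by
    intro n m hnm
    have := hanti n m hnm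
    nlinarith [norm_nonneg (x m - x n)]
  have hbddrange : BddBelow (range fun n => g (x n)) :=
    ⟨cb, by rintro r ⟨n, rfl⟩; exact hgb (x n)⟩
  set L : ℝ := ⨅ n, g (x n) with hL
  have hgl : Filter.Tendsto (fun n => g (x n)) Filter.atTop (nhds L) :=
    tendsto_atTop_ciInf hganti hbddrange
  have hLle : ∀ n, L ≤ g (x n) := fun n => ciInf_le hbddrange n
  -- Cauchy
  have hcauchy : CauchySeq x := by
    apply cauchySeq_of_le_tendsto_0 (fun N => (g (x N) - L) / γ')
    · intro n m N hn hm
      rw [dist_eq_norm, le_div_iff₀ hγ']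
      rcases le_total n m with h | h
      · have h1 := hanti n m h
        have h2 : g (x n) ≤ g (x N) := hganti hn
        have h3 : L ≤ g (x m) := hLle m
        rw [show x n - x m = -(x m - x n) by abel, norm_neg]
        nlinarith
      · have h1 := hanti m n h
        have h2 : g (x m) ≤ g (x N) := hganti hm
        have h3 : L ≤ g (x n) := hLle n
        nlinarith
    · have : Filter.Tendsto (fun N => (g (x N) - L)) Filter.atTop (nhds (L - L)) :=
        hgl.sub tendsto_const_nhds
      simpa using this.div_const γ'
  obtain ⟨z, hz⟩ := cauchySeq_tendsto_of_complete hcauchy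
  -- z belongs to all descent sets
  have hzA : ∀ n, z ∈ A (x n) := by
    intro n
    by_contra hcon
    simp only [hA, mem_setOf_eq, not_le] at hcon
    set δ : ℝ := g z + γ' * ‖z - x n‖ - g (x n) with hδ
    have hδpos : 0 < δ := by simp only [hδ]; linarith
    have hr : g z - δ/2 < g z := by linarith
    have hev1 : ∀ᶠ m in Filter.atTop, g z - δ/2 < g (x m) :=
      hz.eventually (hg z (g z - δ/2) hr)
    have hnorm : Filter.Tendsto (fun m => (g z - δ/2) + γ' * ‖x m - x n‖)
        Filter.atTop (nhds ((g z - δ/2) + γ' * ‖z - x n‖)) := by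
      apply Filter.Tendsto.const_add
      exact (Filter.Tendsto.const_mul γ' (((hz.sub_const (x n)).norm)))
    have hev2 : ∀ᶠ m in Filter.atTop,
        g (x n) < (g z - δ/2) + γ' * ‖x m - x n‖ := by
      apply hnorm.eventually_const_lt
      simp only [hδ]; linarith
    have hev3 : ∀ᶠ m in Filter.atTop, n ≤ m := Filter.eventually_ge_atTop n
    obtain ⟨m, h1, h2, h3⟩ := (hev1.and (hev2.and hev3)).exists
    have h4 := hanti n m h3
    nlinarith
  have hgz : ∀ n, g z ≤ g (x n) := by
    intro n
    have := hzA n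
    simp only [hA, mem_setOf_eq] at this
    nlinarith [norm_nonneg (z - x n)]
  refine ⟨z, by have h := hzA 0; rw [hx0] at h; exact h, ?_⟩
  intro w hw
  by_contra hcon
  push_neg at hcon
  have hwAz : ∀ n, w ∈ A (x n) := by
    intro n
    refine htrans (x n) z w (hzA n) ?_
    simpa [hA, mem_setOf_eq] using hcon
  have hkey : ∀ n : ℕ, γ' * ‖w - z‖ ≤ (1/2) ^ n := by
    intro n
    have h1 : sInf (g '' A (x n)) ≤ g w :=
      csInf_le (hbdd (x n)) ⟨w, hwAz n, rfl⟩
    have h2 := happrox n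
    have h3 := hgz (n+1)
    linarith
  have hpos : 0 < γ' * ‖w - z‖ := by
    have : 0 < ‖w - z‖ := norm_pos_iff.mpr (sub_ne_zero.mpr hw)
    positivity
  obtain ⟨n, hn⟩ := exists_pow_lt_of_lt_one hpos (by norm_num : (1/2:ℝ) < 1)
  exact absurd (hkey n) (not_le.mpr hn)

/-- on a Banach space, if the global slope of a proper lsc lower-bounded
function is ≥ γ > 0 everywhere off `xbar`, then `xbar` is a global minimizer. -/
theorem globalSlope_ge_implies_min
    {X : Type*} [NormedAddCommGroup X] [NormedSpace ℝ X] [CompleteSpace X]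
    (f : X → EReal) (hbot : ∀ x, f x ≠ ⊥) (hproper : ∃ x, f x ≠ ⊤)
    (hlsc : LowerSemicontinuous f) (hbdd : ∃ c : ℝ, ∀ x, ((c : ℝ) : EReal) ≤ f x)
    (xbar : X) (γ : ℝ) (hγ : 0 < γ)
    (hslope : ∀ x : X, x ≠ xbar → ((γ : ℝ) : EReal) ≤ globalSlope f x) :
    ∀ y : X, f xbar ≤ f y := by
  classical
  intro y0
  by_cases hT : f y0 = ⊤
  · rw [hT]; exact le_top
  obtain ⟨c, hc⟩ := hbdd
  set T : EReal := f y0 with hTdef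
  have hTbot : T ≠ ⊥ := hbot y0
  have hcT : ((T.toReal : ℝ) : EReal) = T := EReal.coe_toReal hT hTbot
  -- truncated real-valued function
  set g : X → ℝ := fun x => (min (f x) T).toReal with hg
  have hminbot : ∀ x, min (f x) T ≠ ⊥ := by
    intro x h
    rcases le_total (f x) T with hh | hh
    · rw [min_eq_left hh] at h; exact hbot x h
    · rw [min_eq_right hh] at h; exact hTbot h
  have hmintop : ∀ x, min (f x) T ≠ ⊤ := by
    intro x h
    exact hT (top_le_iff.mp (h ▸ min_le_right (f x) T))
  have hcoe_g : ∀ x, ((g x : ℝ) : EReal) = min (f x) T :=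
    fun x => EReal.coe_toReal (hmintop x) (hminbot x)
  have hgb : ∀ x, min c T.toReal ≤ g x := by
    intro x
    have h1 : ((min c T.toReal : ℝ) : EReal) ≤ min (f x) T := by
      apply le_min
      · exact le_trans (by exact_mod_cast min_le_left c T.toReal) (hc x)
      · rw [← hcT]; exact_mod_cast min_le_right c T.toReal
    rw [← hcoe_g x] at h1
    exact_mod_cast h1
  have hglsc : LowerSemicontinuous g := by
    intro x r hr
    have h1 : ((r:ℝ):EReal) < min (f x) T := by
      rw [← hcoe_g x]; exact_mod_cast hr
    have h2 : ((r:ℝ):EReal) < f x := lt_of_lt_of_le h1 (min_le_left _ _)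
    have h3 : ((r:ℝ):EReal) < T := lt_of_lt_of_le h1 (min_le_right _ _)
    filter_upwards [hlsc x ((r:ℝ):EReal) h2] with z hz
    have h4 : ((r:ℝ):EReal) < min (f z) T := lt_min hz h3
    rw [← hcoe_g z] at h4
    exact_mod_cast h4
  have hγ2 : 0 < γ / 2 := by linarith
  obtain ⟨z, hz0, hzmin⟩ := ekeland_core g (min c T.toReal) hgb hglsc (γ/2) hγ2 y0
  -- f z ≤ T
  have hgy0 : g y0 = T.toReal := by
    show (min (f y0) T).toReal = T.toReal
    rw [← hTdef, min_self]
  have hfzT : f z ≤ T := by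
    by_cases hzy : z = y0
    · rw [hzy]
    · have hnz : 0 < ‖z - y0‖ := norm_pos_iff.mpr (sub_ne_zero.mpr hzy)
      have hlt : g z < g y0 := by nlinarith
      rw [hgy0] at hlt
      have h5 : min (f z) T < T := by
        by_contra hcon
        push_neg at hcon
        have : T.toReal ≤ g z :=
          EReal.toReal_le_toReal hcon hTbot (hmintop z)
        linarith
      rcases lt_or_ge (f z) T with h | h
      · exact h.le
      · rw [min_eq_right h] at h5; exact absurd h5 (lt_irrefl T)
  have hfztop : f z ≠ ⊤ := fun h => hT (top_le_iff.mp (h ▸ hfzT))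
  have hgz : ((g z : ℝ) : EReal) = f z := by
    rw [hcoe_g z, min_eq_left hfzT]
  -- global slope of f at z is at most γ/2
  have hslope_z : globalSlope f z ≤ ((γ/2 : ℝ) : EReal) := by
    rw [globalSlope]
    apply iSup₂_le
    intro w hw
    simp only [mem_setOf_eq] at hw
    rcases le_or_gt (f z) (f w) with hle | hlt
    · have hsub : f z - f w ≤ 0 := by
        rcases eq_or_ne (f w) ⊤ with h | h
        · rw [h, EReal.sub_top]; exact bot_le
        · calc f z - f w ≤ f w - f w := EReal.sub_le_sub hle le_rfl
            _ = 0 := by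
              rw [← EReal.coe_toReal h (hbot w), ← EReal.coe_sub]
              norm_num
      rw [max_eq_right hsub, zero_mul]
      exact_mod_cast hγ2.le
    · -- f w < f z ≤ T
      have hfwT : f w ≤ T := le_of_lt (lt_of_lt_of_le hlt hfzT)
      have hgw : ((g w : ℝ) : EReal) = f w := by
        rw [hcoe_g w, min_eq_left hfwT]
      have hmin := hzmin w hw
      have hnz : (0:ℝ) < ‖w - z‖ := norm_pos_iff.mpr (sub_ne_zero.mpr hw)
      have hnorm_eq : ‖z - w‖ = ‖w - z‖ := norm_sub_rev z w
      have hsub_eq : f z - f w = (((g z - g w : ℝ)) : EReal) := by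
        rw [EReal.coe_sub, hgz, hgw]
      have hmax : max (f z - f w) 0 = ((max (g z - g w) 0 : ℝ) : EReal) := by
        rw [hsub_eq]
        exact_mod_cast (EReal.coe_strictMono.monotone.map_max).symm
      rw [hmax, ← EReal.coe_mul, EReal.coe_le_coe_iff]
      have hd : g z - g w < (γ/2) * ‖w - z‖ := by linarith
      have hmax_le : max (g z - g w) 0 ≤ (γ/2) * ‖w - z‖ := by
        apply max_le hd.le
        positivity
      calc max (g z - g w) 0 * (‖z - w‖)⁻¹
          ≤ ((γ/2) * ‖w - z‖) * (‖z - w‖)⁻¹ := by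
            apply mul_le_mul_of_nonneg_right hmax_le
            positivity
        _ = γ/2 := by
            rw [hnorm_eq, mul_assoc, mul_inv_cancel₀ (ne_of_gt hnz)]
            ring
  -- hence z = xbar
  have hzxbar : z = xbar := by
    by_contra hne
    have h1 := hslope z hne
    have h2 := le_trans h1 hslope_z
    rw [EReal.coe_le_coe_iff] at h2
    linarith
  rw [← hzxbar]
  exact hfzT
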